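/- The function u(x,t) = −t⁴/3 − 2tx − 12/(x − t³/3)² satisfies, at every point with x ≠ t³/3, both auxiliary equations −10t − 3u_x − 2t·u_xt − (5/3)t³·u_xx − x·u_xx = 0 and 2 + u_xt + t²·u_xx = 0. -/

import Mathlib

open Real

noncomputable def px (u : ℝ → ℝ → ℝ) (x t : ℝ) : ℝ := deriv (fun y => u y t) x
noncomputable def pt (u : ℝ → ℝ → ℝ) (x t : ℝ) : ℝ := deriv (fun s => u x s) t

noncomputable def U : ℝ → ℝ → ℝ :=
  fun x t => -t ^ 4 / 3 - 2 * t * x - 12 / (x - t ^ 3 / 3) ^ 2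

lemma hasDerivAt_U (x t : ℝ) (h : x - t ^ 3 / 3 ≠ 0) :
    HasDerivAt (fun y => U y t) (-2 * t + 24 / (x - t ^ 3 / 3) ^ 3) x := by
  have h1 : HasDerivAt (fun y : ℝ => (y - t ^ 3 / 3) ^ 2) (2 * (x - t ^ 3 / 3)) x := by
    have := ((hasDerivAt_id x).sub_const (t ^ 3 / 3)).fun_pow 2
    simpa using this
  have h2 : HasDerivAt (fun y : ℝ => 12 / (y - t ^ 3 / 3) ^ 2)
      ((0 * (x - t ^ 3 / 3) ^ 2 - 12 * (2 * (x - t ^ 3 / 3))) / ((x - t ^ 3 / 3) ^ 2) ^ 2) x :=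
    (hasDerivAt_const x (12 : ℝ)).div h1 (pow_ne_zero 2 h)
  have h3 : HasDerivAt (fun y : ℝ => -t ^ 4 / 3 - 2 * t * y) (-2 * t) x := by
    have := ((hasDerivAt_id x).const_mul (2 * t)).const_sub (-t ^ 4 / 3)
    simpa using this
  have := h3.fun_sub h2
  refine this.congr_deriv ?_
  generalize x - t ^ 3 / 3 = d at h ⊢
  field_simp
  ring

lemma px_U (x t : ℝ) (h : x - t ^ 3 / 3 ≠ 0) :
    px U x t = -2 * t + 24 / (x - t ^ 3 / 3) ^ 3 :=
  (hasDerivAt_U x t h).deriv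

lemma pxx_U (x t : ℝ) (h : x - t ^ 3 / 3 ≠ 0) :
    px (px U) x t = -72 / (x - t ^ 3 / 3) ^ 4 := by
  have hev : (fun y => px U y t) =ᶠ[nhds x] (fun y => -2 * t + 24 / (y - t ^ 3 / 3) ^ 3) := by
    have hopen : IsOpen {y : ℝ | y - t ^ 3 / 3 ≠ 0} :=
      isOpen_ne.preimage (by continuity)
    filter_upwards [hopen.mem_nhds h] with y hy
    exact px_U y t hy
  have hg : HasDerivAt (fun y : ℝ => -2 * t + 24 / (y - t ^ 3 / 3) ^ 3)
      (-72 / (x - t ^ 3 / 3) ^ 4) x := by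
    have h1 : HasDerivAt (fun y : ℝ => (y - t ^ 3 / 3) ^ 3) (3 * (x - t ^ 3 / 3) ^ 2) x := by
      have := ((hasDerivAt_id x).sub_const (t ^ 3 / 3)).fun_pow 3
      simpa using this
    have h2 := (hasDerivAt_const x (24 : ℝ)).div h1 (pow_ne_zero 3 h)
    have := h2.const_add (-2 * t)
    refine this.congr_deriv ?_
    generalize x - t ^ 3 / 3 = d at h ⊢
    field_simp
    ring
  show deriv (fun y => px U y t) x = _
  rw [hev.deriv_eq]
  exact hg.deriv

lemma pxt_U (x t : ℝ) (h : x - t ^ 3 / 3 ≠ 0) :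
    pt (px U) x t = -2 + 72 * t ^ 2 / (x - t ^ 3 / 3) ^ 4 := by
  have hev : (fun s => px U x s) =ᶠ[nhds t] (fun s => -2 * s + 24 / (x - s ^ 3 / 3) ^ 3) := by
    have hopen : IsOpen {s : ℝ | x - s ^ 3 / 3 ≠ 0} :=
      isOpen_ne.preimage (by continuity)
    filter_upwards [hopen.mem_nhds h] with s hs
    exact px_U x s hs
  have hg : HasDerivAt (fun s : ℝ => -2 * s + 24 / (x - s ^ 3 / 3) ^ 3)
      (-2 + 72 * t ^ 2 / (x - t ^ 3 / 3) ^ 4) t := by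
    have h0 : HasDerivAt (fun s : ℝ => x - s ^ 3 / 3) (-(t ^ 2)) t := by
      have := (((hasDerivAt_id t).fun_pow 3).div_const 3).const_sub x
      refine this.congr_deriv ?_
      simp [id_eq]
    have h1 : HasDerivAt (fun s : ℝ => (x - s ^ 3 / 3) ^ 3)
        (3 * (x - t ^ 3 / 3) ^ 2 * (-(t ^ 2))) t := by
      have := h0.fun_pow 3
      refine this.congr_deriv ?_
      norm_num
    have h2 := (hasDerivAt_const t (24 : ℝ)).div h1 (pow_ne_zero 3 h)
    have h3 : HasDerivAt (fun s : ℝ => -2 * s) (-2 : ℝ) t := by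
      simpa using (hasDerivAt_id t).const_mul (-2 : ℝ)
    have := h3.fun_add h2
    refine this.congr_deriv ?_
    generalize x - t ^ 3 / 3 = d at h ⊢
    field_simp
    ring
  show deriv (fun s => px U x s) t = _
  rw [hev.deriv_eq]
  exact hg.deriv

theorem boussinesq_prolonged_eqs :
    ∀ x t : ℝ, x ≠ t ^ 3 / 3 →
      (let u : ℝ → ℝ → ℝ := fun x t => -t ^ 4 / 3 - 2 * t * x - 12 / (x - t ^ 3 / 3) ^ 2
       (-10 * t - 3 * px u x t - 2 * t * pt (px u) x t
          - (5 / 3) * t ^ 3 * px (px u) x t - x * px (px u) x t = 0) ∧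
       (2 + pt (px u) x t + t ^ 2 * px (px u) x t = 0)) := by
  intro x t hx
  have h : x - t ^ 3 / 3 ≠ 0 := sub_ne_zero.mpr hx
  show (-10 * t - 3 * px U x t - 2 * t * pt (px U) x t
          - (5 / 3) * t ^ 3 * px (px U) x t - x * px (px U) x t = 0) ∧
       (2 + pt (px U) x t + t ^ 2 * px (px U) x t = 0)
  rw [px_U x t h, pxx_U x t h, pxt_U x t h]
  have hgen : x - t ^ 3 / 3 = x - t ^ 3 / 3 := rfl
  constructor
  · generalize hd : x - t ^ 3 / 3 = d at h ⊢
    have hx2 : x = d + t ^ 3 / 3 := by linarith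
    subst hx2
    field_simp
    ring
  · generalize hd : x - t ^ 3 / 3 = d at h ⊢
    field_simp
    ring
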